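/- Let G = A(n,θ) for odd n = 2m+1 > 1, and let C be a union of conjugacy classes of order-4 elements containing exactly one class from each inverse pair (so |C| = 2^{n-1}(2^n−1)). Then the continuous-time quantum walk on the oriented Cayley graph Cay(G,C), with transition matrices U(t) = e^{tS} for S the skew adjacency matrix, has uniform mixing at time τ = π/2^{n+1}: every entry of U(τ) has absolute value 2^{-n}. -/

import Mathlib

noncomputable section

abbrev Fq (n : ℕ) : Type := GaloisField 2 n

instance (n : ℕ) : Fintype (Fq n) := Fintype.ofFinite _

@[ext] structure SuzukiA (n : ℕ) (θ : Fq n ≃+* Fq n) where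
  a : Fq n
  b : Fq n

namespace SuzukiA

variable {n : ℕ} {θ : Fq n ≃+* Fq n}

instance : Mul (SuzukiA n θ) := ⟨fun x y => ⟨x.a + y.a, x.b + y.b + x.a * θ y.a⟩⟩
instance : One (SuzukiA n θ) := ⟨⟨0, 0⟩⟩
instance : Inv (SuzukiA n θ) := ⟨fun x => ⟨x.a, x.b + x.a * θ x.a⟩⟩

theorem mul_def (x y : SuzukiA n θ) :
    x * y = ⟨x.a + y.a, x.b + y.b + x.a * θ y.a⟩ := rfl

@[simp] theorem one_a : (1 : SuzukiA n θ).a = 0 := rfl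
@[simp] theorem one_b : (1 : SuzukiA n θ).b = 0 := rfl

instance : Group (SuzukiA n θ) where
  mul_assoc x y z := by ext <;> simp [mul_def, map_add] <;> ring
  one_mul x := by ext <;> simp [mul_def]
  mul_one x := by ext <;> simp [mul_def]
  inv_mul_cancel x := by
    have h2 : (2 : Fq n) = 0 := by
      have := CharP.cast_eq_zero (Fq n) 2
      exact_mod_cast this
    show (⟨x.a, x.b + x.a * θ x.a⟩ * x : SuzukiA n θ) = 1
    ext
    · show x.a + x.a = 0
      linear_combination x.a * h2
    · show x.b + x.a * θ x.a + x.b + x.a * θ x.a = 0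
      linear_combination (x.b + x.a * θ x.a) * h2

instance : Fintype (SuzukiA n θ) :=
  Fintype.ofEquiv (Fq n × Fq n)
    { toFun := fun p => ⟨p.1, p.2⟩
      invFun := fun x => (x.a, x.b)
      left_inv := fun _ => rfl
      right_inv := fun _ => rfl }

end SuzukiA

noncomputable instance {n : ℕ} {θ : Fq n ≃+* Fq n} : DecidableEq (SuzukiA n θ) :=
  Classical.decEq _

/-- The skew adjacency matrix of the oriented Cayley graph `Cay(G, C)`:
entry `(u, v)` is `1` if `v * u⁻¹ ∈ C`, `-1` if `(v * u⁻¹)⁻¹ ∈ C`, and `0`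
otherwise. -/
def skewAdj (G : Type*) [Group G] [Fintype G] [DecidableEq G] (C : Finset G) :
    Matrix G G ℝ :=
  fun u v => if v * u⁻¹ ∈ C then 1 else if (v * u⁻¹)⁻¹ ∈ C then -1 else 0

namespace Mix
variable {n : ℕ} {θ : Fq n ≃+* Fq n}

theorem two_eq_zero : (2 : Fq n) = 0 := by
  have := CharP.cast_eq_zero (Fq n) 2
  exact_mod_cast this

theorem add_self (x : Fq n) : x + x = 0 := by
  linear_combination x * (two_eq_zero (n := n))

theorem add_eq_zero_iff {x y : Fq n} : x + y = 0 ↔ x = y := by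
  constructor
  · intro h
    have h2 := add_self (n := n) y
    linear_combination h - h2
  · rintro rfl; exact add_self x

/-- The subgroup of automorphisms fixing `x`. -/
def fixSub (x : Fq n) : Subgroup (Fq n ≃+* Fq n) where
  carrier := {σ | σ x = x}
  one_mem' := rfl
  mul_mem' := by
    intro a b ha hb
    show a (b x) = x
    rw [hb, ha]
  inv_mem' := by
    intro a ha
    show a⁻¹ x = x
    conv_lhs => rw [← ha]
    exact a.symm_apply_apply x

theorem fixed_eval (hθ : ∀ σ : Fq n ≃+* Fq n, σ ∈ Subgroup.zpowers θ)
    {x : Fq n} (hx : θ x = x) : x = 0 ∨ x = 1 := by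
  have hle : Subgroup.zpowers θ ≤ fixSub x := (Subgroup.zpowers_le).mpr hx
  have hf : frobeniusEquiv (Fq n) 2 ∈ fixSub x := hle (hθ _)
  have hxx : x * x = x := by
    have : frobeniusEquiv (Fq n) 2 x = x := hf
    rw [frobeniusEquiv_apply, frobenius_def] at this
    calc x * x = x ^ 2 := (sq x).symm
    _ = x := this
  have : x * (x - 1) = 0 := by linear_combination hxx
  rcases mul_eq_zero.mp this with h | h
  · exact Or.inl h
  · exact Or.inr (by linear_combination h)

/-- Ring automorphisms are the same as `ZMod 2`-algebra automorphisms. -/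
def autEquiv (n : ℕ) : (Fq n ≃+* Fq n) ≃ (Fq n ≃ₐ[ZMod 2] Fq n) where
  toFun σ := AlgEquiv.ofRingEquiv (f := σ) (fun x => by
    have h : (σ : Fq n →+* Fq n).comp (algebraMap (ZMod 2) (Fq n)) = algebraMap _ _ :=
      RingHom.ext_zmod _ _
    exact RingHom.congr_fun h x)
  invFun τ := τ.toRingEquiv
  left_inv σ := by ext x; rfl
  right_inv τ := by ext x; rfl

theorem card_aut (hn : n ≠ 0) : Nat.card (Fq n ≃+* Fq n) = n := by
  rw [Nat.card_congr (autEquiv n),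
    IsGalois.card_aut_eq_finrank, GaloisField.finrank 2 hn]

theorem orderOf_theta_dvd (hn : n ≠ 0) : orderOf θ ∣ n := by
  have h := card_aut (n := n) hn
  exact dvd_trans (orderOf_dvd_natCard θ) (dvd_of_eq h)

theorem odd_orderOf (hodd : Odd n) : Odd (orderOf θ) := by
  have hd : orderOf θ ∣ n :=
    orderOf_theta_dvd (by rintro rfl; exact (Nat.not_odd_iff_even.mpr Even.zero) hodd)
  rcases Nat.even_or_odd (orderOf θ) with h | h
  · exfalso
    have h2 : (2 : ℕ) ∣ n := dvd_trans h.two_dvd hd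
    rw [Nat.odd_iff] at hodd
    omega
  · exact h

theorem theta_mem_zpowers_sq (hodd : Odd n) : θ ∈ Subgroup.zpowers (θ * θ) := by
  obtain ⟨k, hk⟩ := odd_orderOf (θ := θ) hodd
  have h1 : (θ * θ) ^ (k + 1) = θ := by
    have h2 : θ ^ (orderOf θ + 1) = θ := by
      rw [pow_succ, pow_orderOf_eq_one, one_mul]
    calc (θ * θ) ^ (k + 1) = (θ ^ 2) ^ (k + 1) := by rw [sq]
    _ = θ ^ (2 * (k + 1)) := by rw [← pow_mul]
    _ = θ ^ (orderOf θ + 1) := by rw [hk]; ring_nf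
    _ = θ := h2
  exact Subgroup.mem_zpowers_iff.mpr ⟨((k+1 : ℕ) : ℤ), by rw [zpow_natCast]; exact h1⟩

theorem fixed_of_sq_fixed (hodd : Odd n) {x : Fq n} (hx : θ (θ x) = x) : θ x = x := by
  have h2 : θ * θ ∈ fixSub x := by
    show (θ * θ) x = x
    show θ (θ x) = x
    exact hx
  have h3 : θ ∈ fixSub x := Subgroup.zpowers_le.mpr h2 (theta_mem_zpowers_sq hodd)
  exact h3

theorem sum_shift (x : Fq n) :
    ∑ i ∈ Finset.range (orderOf θ), (θ ^ (i+1)) x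
      = ∑ i ∈ Finset.range (orderOf θ), (θ ^ i) x := by
  have hd : (θ ^ orderOf θ) x = x := by rw [pow_orderOf_eq_one]; rfl
  have h2 : ∑ i ∈ Finset.range (orderOf θ + 1), (θ ^ i) x
      = ∑ i ∈ Finset.range (orderOf θ), (θ ^ (i+1)) x + (θ ^ 0) x :=
    Finset.sum_range_succ' _ _
  have h3 : ∑ i ∈ Finset.range (orderOf θ + 1), (θ ^ i) x
      = ∑ i ∈ Finset.range (orderOf θ), (θ ^ i) x + (θ ^ orderOf θ) x :=
    Finset.sum_range_succ _ _
  have h4 := h2.symm.trans h3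
  rw [hd] at h4
  have h0 : (θ ^ 0) x = x := rfl
  rw [h0] at h4
  exact add_right_cancel h4

/-- The trace relative to `θ`. -/
def Tr (θ : Fq n ≃+* Fq n) (x : Fq n) : Fq n :=
  ∑ i ∈ Finset.range (orderOf θ), (θ ^ i) x

theorem pow_apply (k : ℕ) (x : Fq n) : (θ ^ (k+1)) x = θ ((θ ^ k) x) := by
  rw [pow_succ']; rfl

theorem theta_Tr (x : Fq n) : θ (Tr θ x) = Tr θ x := by
  unfold Tr
  rw [map_sum]
  have h1 : ∑ i ∈ Finset.range (orderOf θ), θ ((θ ^ i) x)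
      = ∑ i ∈ Finset.range (orderOf θ), (θ ^ (i+1)) x := by
    apply Finset.sum_congr rfl; intro i _; rw [pow_apply]
  rw [h1, sum_shift]

theorem Tr_add (x y : Fq n) : Tr θ (x + y) = Tr θ x + Tr θ y := by
  unfold Tr
  rw [← Finset.sum_add_distrib]
  apply Finset.sum_congr rfl
  intro i _
  exact map_add _ x y

theorem Tr_theta (x : Fq n) : Tr θ (θ x) = Tr θ x := by
  unfold Tr
  have h1 : ∑ i ∈ Finset.range (orderOf θ), (θ ^ i) (θ x)
      = ∑ i ∈ Finset.range (orderOf θ), (θ ^ (i+1)) x := by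
    apply Finset.sum_congr rfl; intro i _
    rw [pow_succ]
    rfl
  rw [h1, sum_shift]

theorem Tr_zero : Tr θ 0 = 0 := by
  unfold Tr
  apply Finset.sum_eq_zero
  intro i _
  exact map_zero _

theorem Tr_one (hodd : Odd n) : Tr θ 1 = 1 := by
  unfold Tr
  have h1 : ∀ i ∈ Finset.range (orderOf θ), (θ ^ i) (1 : Fq n) = 1 := by
    intro i _; exact map_one _
  rw [Finset.sum_congr rfl h1, Finset.sum_const, Finset.card_range]
  obtain ⟨k, hk⟩ := odd_orderOf (θ := θ) hodd
  rw [hk]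
  push_cast
  rw [nsmul_eq_mul]
  push_cast
  linear_combination (k : Fq n) * (two_eq_zero (n := n))

theorem Tr_mem (hθ : ∀ σ : Fq n ≃+* Fq n, σ ∈ Subgroup.zpowers θ) (x : Fq n) :
    Tr θ x = 0 ∨ Tr θ x = 1 :=
  fixed_eval hθ (theta_Tr x)

end Mix

namespace Mix2
open Mix
variable {n : ℕ} {θ : Fq n ≃+* Fq n}

/-- `ψ t = t + θ t` as an additive hom. -/
def psi (θ : Fq n ≃+* Fq n) : Fq n →+ Fq n where
  toFun t := t + θ t
  map_zero' := by simp
  map_add' x y := by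
    show x + y + θ (x + y) = (x + θ x) + (y + θ y)
    rw [map_add θ]; ring

/-- `Tr` as an additive hom. -/
def trHom (θ : Fq n ≃+* Fq n) : Fq n →+ Fq n where
  toFun := Tr θ
  map_zero' := Tr_zero
  map_add' := Tr_add

theorem ker_psi (hθ : ∀ σ : Fq n ≃+* Fq n, σ ∈ Subgroup.zpowers θ) :
    ((psi θ).ker : Set (Fq n)) = {0, 1} := by
  ext x
  simp only [AddMonoidHom.mem_ker, SetLike.mem_coe, Set.mem_insert_iff, Set.mem_singleton_iff]
  constructor
  · intro h
    have hx : θ x = x := (Mix.add_eq_zero_iff.mp (by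
      have : x + θ x = 0 := h
      linear_combination this)).symm
    exact fixed_eval hθ hx
  · rintro (rfl | rfl)
    · show (0 : Fq n) + θ 0 = 0; simp
    · show (1 : Fq n) + θ 1 = 0; rw [map_one]; exact add_self 1

theorem range_tr (hθ : ∀ σ : Fq n ≃+* Fq n, σ ∈ Subgroup.zpowers θ) (hodd : Odd n) :
    ((trHom θ).range : Set (Fq n)) = {0, 1} := by
  ext x
  simp only [AddMonoidHom.mem_range, SetLike.mem_coe, Set.mem_insert_iff,
    Set.mem_singleton_iff]
  constructor
  · rintro ⟨y, rfl⟩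
    exact Tr_mem hθ y
  · rintro (rfl | rfl)
    · exact ⟨0, Tr_zero⟩
    · exact ⟨1, Tr_one hodd⟩

theorem range_psi_le (t : Fq n) : Tr θ (t + θ t) = 0 := by
  rw [Tr_add, Tr_theta]
  exact add_self _

theorem card_set01 : Nat.card ({0, 1} : Set (Fq n)) = 2 := by
  rw [Nat.card_coe_set_eq, Set.ncard_pair (zero_ne_one)]

theorem hilbert90 (hθ : ∀ σ : Fq n ≃+* Fq n, σ ∈ Subgroup.zpowers θ) (hodd : Odd n)
    {x : Fq n} (hx : Tr θ x = 0) : ∃ t : Fq n, t + θ t = x := by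
  -- range ψ = ker Tr by cardinality
  have hle : (psi θ).range ≤ (trHom θ).ker := by
    rintro y ⟨t, rfl⟩
    exact range_psi_le t
  have hq : (0:ℕ) < Nat.card (Fq n) := Nat.card_pos
  have h1 : Nat.card (Fq n) = Nat.card (Fq n ⧸ (psi θ).ker) * Nat.card (psi θ).ker :=
    AddSubgroup.card_eq_card_quotient_mul_card_addSubgroup _
  have h2 : Nat.card (Fq n ⧸ (psi θ).ker) = Nat.card (psi θ).range :=
    Nat.card_congr (QuotientAddGroup.quotientKerEquivRange (psi θ)).toEquiv
  have h3 : Nat.card (psi θ).ker = 2 := by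
    calc Nat.card (psi θ).ker
        = Nat.card ({0, 1} : Set (Fq n)) :=
          Nat.card_congr (Equiv.setCongr (ker_psi (θ := θ) hθ))
      _ = 2 := by rw [Nat.card_coe_set_eq, Set.ncard_pair (zero_ne_one)]
  have h4 : Nat.card (Fq n) = Nat.card (Fq n ⧸ (trHom θ).ker) * Nat.card (trHom θ).ker :=
    AddSubgroup.card_eq_card_quotient_mul_card_addSubgroup _
  have h5 : Nat.card (Fq n ⧸ (trHom θ).ker) = Nat.card (trHom θ).range :=
    Nat.card_congr (QuotientAddGroup.quotientKerEquivRange (trHom θ)).toEquiv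
  have h6 : Nat.card (trHom θ).range = 2 := by
    calc Nat.card (trHom θ).range
        = Nat.card ({0, 1} : Set (Fq n)) :=
          Nat.card_congr (Equiv.setCongr (range_tr (θ := θ) hθ hodd))
      _ = 2 := by rw [Nat.card_coe_set_eq, Set.ncard_pair (zero_ne_one)]
  have hcard : Nat.card (trHom θ).ker ≤ Nat.card (psi θ).range := by
    rw [h2, h3] at h1; rw [h5, h6] at h4
    omega
  have heq : (psi θ).range = (trHom θ).ker :=
    AddSubgroup.eq_of_le_of_card_ge hle hcard
  have : x ∈ (psi θ).range := by
    rw [heq]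
    exact hx
  obtain ⟨t, ht⟩ := this
  exact ⟨t, ht⟩

theorem no_solution (hθ : ∀ σ : Fq n ≃+* Fq n, σ ∈ Subgroup.zpowers θ) (hodd : Odd n)
    (t : Fq n) : t + θ t ≠ 1 := by
  intro h
  have h1 : Tr θ (t + θ t) = 0 := range_psi_le t
  rw [h, Tr_one hodd] at h1
  exact one_ne_zero h1

theorem norm_injective (hodd : Odd n) {c c' : Fq n} (h : c * θ c = c' * θ c') : c = c' := by
  rcases eq_or_ne c' 0 with rfl | hc'
  · rw [map_zero, mul_zero] at h
    rcases mul_eq_zero.mp h with h0 | h0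
    · exact h0
    · exact θ.injective (by rw [h0, map_zero])
  · rcases eq_or_ne c 0 with rfl | hc
    · rw [map_zero, mul_zero] at h
      rcases mul_eq_zero.mp h.symm with h0 | h0
      · exact h0.symm
      · exact (θ.injective (by rw [h0, map_zero])).symm
    · set u := c / c' with hu
      have hθc' : θ c' ≠ 0 := fun h0 => hc' (θ.injective (by rw [h0, map_zero]))
      have hunorm : u * θ u = 1 := by
        rw [hu]
        rw [div_eq_mul_inv, map_mul, map_inv₀]
        field_simp
        linear_combination h
      have hu0 : u ≠ 0 := div_ne_zero hc hc'
      have hθu : θ u = u⁻¹ := by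
        field_simp
        linear_combination hunorm
      have hsq : θ (θ u) = u := by
        rw [hθu, map_inv₀, hθu, inv_inv]
      have hfix : θ u = u := fixed_of_sq_fixed hodd hsq
      rw [hfix] at hunorm
      have h5 : (u - 1) * (u - 1) = 0 := by
        linear_combination hunorm + (1 - u) * (two_eq_zero (n := n))
      have h6 : u = 1 := by
        have := mul_self_eq_zero.mp h5
        linear_combination this
      rw [hu, div_eq_one_iff_eq hc'] at h6
      exact h6

open scoped Classical

/-- The quadratic additive character. -/
def chi (θ : Fq n ≃+* Fq n) (x : Fq n) : ℝ := if Tr θ x = 0 then 1 else -1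

theorem chi_zero : chi θ 0 = 1 := by rw [chi, if_pos Tr_zero]

theorem chi_one (hodd : Odd n) : chi θ 1 = -1 := by
  rw [chi, if_neg]
  rw [Tr_one hodd]
  exact one_ne_zero

theorem chi_add (hθ : ∀ σ : Fq n ≃+* Fq n, σ ∈ Subgroup.zpowers θ) (x y : Fq n) :
    chi θ (x + y) = chi θ x * chi θ y := by
  unfold chi
  have hxy : Tr θ (x + y) = Tr θ x + Tr θ y := Tr_add x y
  rcases Tr_mem hθ x with hx | hx <;> rcases Tr_mem hθ y with hy | hy <;>
      rw [hx, hy] at hxy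
  · rw [if_pos (by rw [hxy]; ring), if_pos hx, if_pos hy]; ring
  · rw [if_neg (by rw [hxy, zero_add]; exact one_ne_zero), if_pos hx, if_neg (by rw [hy]; exact one_ne_zero)]; ring
  · rw [if_neg (by rw [hxy, add_zero]; exact one_ne_zero), if_neg (by rw [hx]; exact one_ne_zero), if_pos hy]; ring
  · rw [if_pos (by rw [hxy]; exact add_self 1), if_neg (by rw [hx]; exact one_ne_zero), if_neg (by rw [hy]; exact one_ne_zero)]; ring

theorem chi_abs (x : Fq n) : |chi θ x| = 1 := by
  unfold chi; split <;> simp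

theorem chi_sq (x : Fq n) : chi θ x * chi θ x = 1 := by
  unfold chi; split <;> ring

theorem chi_sum_zero (hθ : ∀ σ : Fq n ≃+* Fq n, σ ∈ Subgroup.zpowers θ) (hodd : Odd n)
    {s : Fq n} (hs : s ≠ 0) : ∑ x : Fq n, chi θ (x * s) = 0 := by
  have key : ∑ x : Fq n, chi θ (x * s) = ∑ x : Fq n, chi θ ((x + s⁻¹) * s) :=
    (Fintype.sum_equiv (Equiv.addRight s⁻¹) _ _ (fun x => rfl)).symm
  have h2 : ∀ x : Fq n, chi θ ((x + s⁻¹) * s) = chi θ (x * s) * (-1) := by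
    intro x
    have : (x + s⁻¹) * s = x * s + 1 := by field_simp
    rw [this, chi_add hθ, chi_one hodd]
  rw [Finset.sum_congr rfl (fun x _ => h2 x)] at key
  rw [← Finset.sum_mul] at key
  linarith [key]

theorem chi_sum_full (hθ : ∀ σ : Fq n ≃+* Fq n, σ ∈ Subgroup.zpowers θ) (hodd : Odd n)
    (β : Fq n) :
    ∑ x : Fq n, chi θ (β * x) = if β = 0 then (Fintype.card (Fq n) : ℝ) else 0 := by
  rcases eq_or_ne β 0 with rfl | hβ
  · rw [if_pos rfl]
    have : ∀ x : Fq n, chi θ ((0:Fq n) * x) = 1 := by intro x; rw [zero_mul, chi_zero]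
    rw [Finset.sum_congr rfl (fun x _ => this x), Finset.sum_const, Finset.card_univ]
    simp
  · rw [if_neg hβ]
    have := chi_sum_zero (θ := θ) hθ hodd hβ
    rw [← this]
    apply Finset.sum_congr rfl
    intro x _
    rw [mul_comm]

end Mix2

namespace Mix3
open Mix Mix2 SuzukiA
variable {n : ℕ} {θ : Fq n ≃+* Fq n}

theorem inv_def (x : SuzukiA n θ) : x⁻¹ = ⟨x.a, x.b + x.a * θ x.a⟩ := rfl

theorem one_def : (1 : SuzukiA n θ) = ⟨0, 0⟩ := rfl

theorem sq_def (g : SuzukiA n θ) : g * g = ⟨0, g.a * θ g.a⟩ := by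
  ext
  · exact add_self g.a
  · show g.b + g.b + g.a * θ g.a = g.a * θ g.a
    rw [add_self g.b, zero_add]

theorem orderOf_eq_four_iff (g : SuzukiA n θ) : orderOf g = 4 ↔ g.a ≠ 0 := by
  constructor
  · intro h ha
    have h2 : g * g = 1 := by
      rw [sq_def, ha, zero_mul]; rfl
    have : orderOf g ∣ 2 := orderOf_dvd_of_pow_eq_one (by rw [pow_two]; exact h2)
    rw [h] at this
    omega
  · intro ha
    have hθa : θ g.a ≠ 0 := fun h0 => ha (θ.injective (by rw [h0, map_zero]))
    have h2 : g ^ 2 = ⟨0, g.a * θ g.a⟩ := by rw [pow_two]; exact sq_def g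
    have h4 : g ^ (2^2) = 1 := by
      show g ^ 4 = 1
      have h44 : g ^ 4 = g ^ 2 * g ^ 2 := by rw [← pow_add]
      rw [h44, h2, sq_def]
      ext <;> simp
    have hne : g ^ (2^1) ≠ 1 := by
      rw [pow_one, h2]
      intro hcon
      have : g.a * θ g.a = 0 := congrArg SuzukiA.b hcon
      exact (mul_ne_zero ha hθa) this
    have := orderOf_eq_prime_pow (p := 2) (n := 1) hne h4
    simpa using this

theorem conj_calc (c e a b : Fq n) :
    (⟨c, e⟩ * ⟨a, b⟩ * (⟨c, e⟩ : SuzukiA n θ)⁻¹) = (⟨a, b + (c * θ a + a * θ c)⟩ : SuzukiA n θ) := by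
  ext
  · show c + a + c = a
    linear_combination c * (two_eq_zero (n := n))
  · show (e + b + c * θ a) + (e + c * θ c) + (c + a) * θ c = b + (c * θ a + a * θ c)
    linear_combination (e + c * θ c) * (two_eq_zero (n := n))

theorem isConj_iff' (g h : SuzukiA n θ) :
    IsConj g h ↔ ∃ c : Fq n, h = ⟨g.a, g.b + (c * θ g.a + g.a * θ c)⟩ := by
  rw [isConj_iff]
  constructor
  · rintro ⟨k, rfl⟩
    refine ⟨k.a, ?_⟩
    have := conj_calc (θ := θ) k.a k.b g.a g.b
    rw [← this]
  · rintro ⟨c, rfl⟩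
    exact ⟨⟨c, 0⟩, conj_calc c 0 g.a g.b⟩

theorem conj_char (hθ : ∀ σ : Fq n ≃+* Fq n, σ ∈ Subgroup.zpowers θ) (hodd : Odd n)
    {a b b' : Fq n} (ha : a ≠ 0) :
    IsConj (⟨a, b⟩ : SuzukiA n θ) ⟨a, b'⟩ ↔ Tr θ ((b + b') / (a * θ a)) = 0 := by
  have hθa : θ a ≠ 0 := fun h0 => ha (θ.injective (by rw [h0, map_zero]))
  have haa : a * θ a ≠ 0 := mul_ne_zero ha hθa
  rw [isConj_iff']
  constructor
  · rintro ⟨c, hc⟩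
    have hb' : b' = b + (c * θ a + a * θ c) := congrArg SuzukiA.b hc
    have hbb : b + b' = c * θ a + a * θ c := by
      rw [hb']; linear_combination b * (two_eq_zero (n := n))
    have hθt : θ (c / a) = θ c / θ a := by
      rw [div_eq_mul_inv, map_mul, map_inv₀, div_eq_mul_inv]
    have hkey : (b + b') / (a * θ a) = c / a + θ (c / a) := by
      rw [hbb, hθt]
      field_simp
    rw [hkey]
    exact range_psi_le (c / a)
  · intro htr
    obtain ⟨t, htt⟩ := hilbert90 hθ hodd htr
    refine ⟨t * a, ?_⟩
    ext
    · rfl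
    · show b' = b + ((t * a) * θ a + a * θ (t * a))
      have : (t * a) * θ a + a * θ (t * a) = (t + θ t) * (a * θ a) := by
        rw [map_mul]; ring
      rw [this, htt, div_mul_cancel₀ _ haa]
      linear_combination (-b) * (two_eq_zero (n := n))

end Mix3

namespace Mix4
open Mix Mix2 Mix3 SuzukiA
open scoped Classical

variable {n : ℕ} {θ : Fq n ≃+* Fq n}


theorem theta_ne {x : Fq n} (hx : x ≠ 0) : θ x ≠ 0 :=
  fun h0 => hx (θ.injective (by rw [h0, map_zero]))

theorem norm_ne (hθ : ∀ σ : Fq n ≃+* Fq n, σ ∈ Subgroup.zpowers θ) (hodd : Odd n)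
    {α : Fq n} (hα : α ≠ 0) (c : Fq n) :
    c * θ c ≠ (α + c) * θ (α + c) := by
  intro h
  have hθα : θ α ≠ 0 := theta_ne hα
  have haa : α * θ α ≠ 0 := mul_ne_zero hα hθα
  have hexp : (α + c) * θ (α + c) = α * θ α + α * θ c + c * θ α + c * θ c := by
    rw [map_add]; ring
  rw [hexp] at h
  have h2 : α * θ α = α * θ c + c * θ α := by
    linear_combination (-1) * h + (-(α * θ c + c * θ α)) * (two_eq_zero (n := n))
  have hθdiv : θ (c / α) = θ c / θ α := by
    rw [div_eq_mul_inv, map_mul, map_inv₀, div_eq_mul_inv]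
  have key : c / α + θ (c / α) = 1 := by
    rw [hθdiv, div_add_div _ _ hα hθα,
      show c * θ α + α * θ c = α * θ α from by linear_combination (-1) * h2]
    exact div_self haa
  exact no_solution hθ hodd _ key

/-- Pairs as group elements. -/
def pe (n : ℕ) (θ : Fq n ≃+* Fq n) : (Fq n × Fq n) ≃ SuzukiA n θ where
  toFun p := ⟨p.1, p.2⟩
  invFun x := (x.a, x.b)
  left_inv _ := rfl
  right_inv _ := rfl


/-- The center-indicator matrix. -/
def Tm (n : ℕ) (θ : Fq n ≃+* Fq n) : Matrix (SuzukiA n θ) (SuzukiA n θ) ℝ :=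
  fun u v => if (v * u⁻¹).a = 0 then 1 else 0

theorem sum_reindex {G : Type*} [Group G] [Fintype G] (Φ Ψ : G → ℝ) (u v : G) :
    ∑ w : G, Φ (w * u⁻¹) * Ψ (v * w⁻¹) = ∑ x : G, Φ x * Ψ (v * u⁻¹ * x⁻¹) := by
  rw [← Equiv.sum_comp (Equiv.mulRight u) (fun w => Φ (w * u⁻¹) * Ψ (v * w⁻¹))]
  apply Finset.sum_congr rfl
  intro x _
  have h1 : (Equiv.mulRight u) x = x * u := rfl
  rw [h1, mul_inv_cancel_right, mul_inv_rev, ← mul_assoc]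

/-- The ±1/0 function defining the skew adjacency matrix. -/
def fC (C : Finset (SuzukiA n θ)) (g : SuzukiA n θ) : ℝ :=
  if g ∈ C then 1 else if g⁻¹ ∈ C then -1 else 0

/-- The sign choosing which coset of order-4 elements over `a` lies in `C`. -/
def eps (C : Finset (SuzukiA n θ)) (a : Fq n) : ℝ :=
  if (⟨a, 0⟩ : SuzukiA n θ) ∈ C then 1 else -1

theorem eps_sq (C : Finset (SuzukiA n θ)) (a : Fq n) : eps C a * eps C a = 1 := by
  unfold eps; split <;> ring

section withC

variable (hθ : ∀ σ : Fq n ≃+* Fq n, σ ∈ Subgroup.zpowers θ) (hodd : Odd n)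
variable (C : Finset (SuzukiA n θ))
variable (hord : ∀ g ∈ C, orderOf g = 4)
variable (hconj : ∀ g ∈ C, ∀ h, IsConj g h → h ∈ C)
variable (hpair : ∀ g : SuzukiA n θ, orderOf g = 4 → (g ∈ C ↔ g⁻¹ ∉ C))

include hord in
theorem fC_zero {g : SuzukiA n θ} (ha : g.a = 0) : fC C g = 0 := by
  unfold fC
  rw [if_neg, if_neg]
  · intro hmem
    have h4 := hord _ hmem
    have := (orderOf_eq_four_iff g⁻¹).mp h4
    rw [inv_def] at this
    exact this ha
  · intro hmem
    exact (orderOf_eq_four_iff g).mp (hord _ hmem) ha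

include hθ hodd hconj hpair in
theorem fC_formula {g : SuzukiA n θ} (ha : g.a ≠ 0) :
    fC C g = eps C g.a * chi θ (g.b / (g.a * θ g.a)) := by
  obtain ⟨a, b⟩ := g
  simp only at ha ⊢
  have hθa : θ a ≠ 0 := fun h0 => ha (θ.injective (by rw [h0, map_zero]))
  have haa : a * θ a ≠ 0 := mul_ne_zero ha hθa
  have hord4 : orderOf (⟨a, b⟩ : SuzukiA n θ) = 4 := (orderOf_eq_four_iff _).mpr ha
  have hord40 : orderOf (⟨a, 0⟩ : SuzukiA n θ) = 4 := (orderOf_eq_four_iff _).mpr ha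
  rcases Tr_mem hθ ((b / (a * θ a))) with h0 | h1
  · -- conjugate to ⟨a,0⟩
    have hcj : IsConj (⟨a, 0⟩ : SuzukiA n θ) ⟨a, b⟩ := by
      rw [conj_char hθ hodd ha, zero_add]
      exact h0
    have hiff : ((⟨a, 0⟩ : SuzukiA n θ) ∈ C) ↔ ((⟨a, b⟩ : SuzukiA n θ) ∈ C) :=
      ⟨fun h => hconj _ h _ hcj, fun h => hconj _ h _ hcj.symm⟩
    unfold fC eps
    rw [chi, if_pos h0]
    by_cases hg : (⟨a, b⟩ : SuzukiA n θ) ∈ C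
    · rw [if_pos hg, if_pos (hiff.mpr hg)]; ring
    · have hginv : (⟨a, b⟩ : SuzukiA n θ)⁻¹ ∈ C := by
        rcases (hpair _ hord4) with h
        by_contra hcon
        exact hg (h.mpr hcon)
      rw [if_neg hg, if_pos hginv, if_neg (fun h => hg (hiff.mp h))]; ring
  · -- conjugate to ⟨a,0⟩⁻¹ = ⟨a, a θ a⟩
    have hne : Tr θ (b / (a * θ a)) ≠ 0 := by rw [h1]; exact one_ne_zero
    have hcj : IsConj ((⟨a, 0⟩ : SuzukiA n θ)⁻¹) ⟨a, b⟩ := by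
      have hinv : (⟨a, 0⟩ : SuzukiA n θ)⁻¹ = ⟨a, a * θ a⟩ := by
        rw [inv_def]; ext <;> simp
      rw [hinv, conj_char hθ hodd ha]
      have hdiv : (a * θ a + b) / (a * θ a) = 1 + b / (a * θ a) := by
        field_simp
      rw [hdiv, Tr_add, Tr_one hodd, h1]
      exact add_self 1
    have hiff : ((⟨a, 0⟩ : SuzukiA n θ)⁻¹ ∈ C) ↔ ((⟨a, b⟩ : SuzukiA n θ) ∈ C) :=
      ⟨fun h => hconj _ h _ hcj, fun h => hconj _ h _ hcj.symm⟩
    have hpair0 := hpair _ hord40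
    unfold fC eps
    rw [chi, if_neg hne]
    by_cases hg : (⟨a, b⟩ : SuzukiA n θ) ∈ C
    · rw [if_pos hg, if_neg]
      · ring
      · intro hmem
        exact (hpair0.mp hmem) (hiff.mpr hg)
    · have hginv : (⟨a, b⟩ : SuzukiA n θ)⁻¹ ∈ C := by
        rcases (hpair _ hord4) with h
        by_contra hcon
        exact hg (h.mpr hcon)
      rw [if_neg hg, if_pos hginv, if_pos (hpair0.mpr (fun h => hg (hiff.mp h)))]
      ring


include hθ hodd hord hconj hpair in
theorem conv_main (g : SuzukiA n θ) :
    ∑ x : SuzukiA n θ, fC C x * fC C (g * x⁻¹)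
      = (Fintype.card (Fq n) : ℝ) * (if g.a = 0 then 1 else 0)
        - (Fintype.card (Fq n) : ℝ)^2 * (if g = 1 then 1 else 0) := by
  set q : ℝ := (Fintype.card (Fq n) : ℝ) with hqdef
  obtain ⟨α, β⟩ := g
  have hsum : ∑ x : SuzukiA n θ, fC C x * fC C ((⟨α, β⟩ : SuzukiA n θ) * x⁻¹)
      = ∑ c : Fq n, ∑ d : Fq n,
          fC C ⟨c, d⟩ * fC C ⟨α + c, β + (d + c * θ c) + α * θ c⟩ := by
    rw [← Equiv.sum_comp (pe n θ) (fun x => fC C x * fC C ((⟨α, β⟩ : SuzukiA n θ) * x⁻¹)),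
      Fintype.sum_prod_type]
    rfl
  rw [hsum]
  by_cases hα : α = 0
  · -- center case
    subst hα
    have hone : ((⟨0, β⟩ : SuzukiA n θ) = 1) ↔ β = 0 := by
      constructor
      · intro h; exact congrArg SuzukiA.b h
      · rintro rfl; rfl
    have hout : ∀ c : Fq n,
        (∑ d : Fq n, fC C ⟨c, d⟩ * fC C ⟨0 + c, β + (d + c * θ c) + 0 * θ c⟩)
          = (if c = 0 then 0 else -q * chi θ (β * (c * θ c)⁻¹)) := by
      intro c
      by_cases hc0 : c = 0
      · subst hc0
        rw [if_pos rfl]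
        apply Finset.sum_eq_zero
        intro d _
        rw [fC_zero C hord (show (⟨(0:Fq n), d⟩ : SuzukiA n θ).a = 0 from rfl), zero_mul]
      · rw [if_neg hc0]
        have hθc : θ c ≠ 0 := theta_ne hc0
        have hcc : c * θ c ≠ 0 := mul_ne_zero hc0 hθc
        have hterm : ∀ d : Fq n,
            fC C ⟨c, d⟩ * fC C ⟨0 + c, β + (d + c * θ c) + 0 * θ c⟩
              = - chi θ (β * (c * θ c)⁻¹) := by
          intro d
          have e1 : (⟨0 + c, β + (d + c * θ c) + 0 * θ c⟩ : SuzukiA n θ)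
              = ⟨c, β + (d + c * θ c)⟩ := by
            ext <;> simp
          rw [e1, fC_formula hθ hodd C hconj hpair (show ((⟨c, d⟩ : SuzukiA n θ)).a ≠ 0 from hc0),
            fC_formula hθ hodd C hconj hpair
              (show ((⟨c, β + (d + c * θ c)⟩ : SuzukiA n θ)).a ≠ 0 from hc0)]
        -- show: eps c * chi (d/(cθc)) * (eps c * chi ((β+(d+cθc))/(cθc))) = - chi (β (cθc)⁻¹)
          have h1 : (β + (d + c * θ c)) / (c * θ c)
              = d / (c * θ c) + (β * (c * θ c)⁻¹ + 1) := by
            field_simp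
            ring
          rw [h1, chi_add hθ, chi_add hθ, chi_one hodd]
          have h2 := chi_sq (θ := θ) (d / (c * θ c))
          have h3 := eps_sq C c
          have h4 : d / (c * θ c) = d * (c * θ c)⁻¹ := div_eq_mul_inv _ _
          linear_combination (-(chi θ (d / (c * θ c))) * (chi θ (d / (c * θ c)))
              * chi θ (β * (c * θ c)⁻¹)) * h3
            + (-(chi θ (β * (c * θ c)⁻¹))) * h2
        rw [Finset.sum_congr rfl (fun d _ => hterm d), Finset.sum_const, Finset.card_univ,
          nsmul_eq_mul]
        rw [← hqdef]
        ring
    rw [Finset.sum_congr rfl (fun c _ => hout c)]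
    set h : Fq n → ℝ := fun c => -q * chi θ (β * (c * θ c)⁻¹) with hh
    have hsplit : ∑ c : Fq n, (if c = 0 then (0:ℝ) else h c) = (∑ c : Fq n, h c) - h 0 := by
      have e1 : ∑ c : Fq n, (if c = 0 then (0:ℝ) else h c)
          = (if (0:Fq n) = 0 then (0:ℝ) else h 0)
            + ∑ c ∈ Finset.univ.erase 0, (if c = 0 then (0:ℝ) else h c) :=
        (Finset.add_sum_erase _ _ (Finset.mem_univ 0)).symm
      have e2 : ∑ c : Fq n, h c = h 0 + ∑ c ∈ Finset.univ.erase 0, h c :=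
        (Finset.add_sum_erase _ _ (Finset.mem_univ 0)).symm
      have e3 : ∑ c ∈ Finset.univ.erase 0, (if c = 0 then (0:ℝ) else h c)
          = ∑ c ∈ Finset.univ.erase 0, h c := by
        apply Finset.sum_congr rfl
        intro c hc
        rw [if_neg (Finset.ne_of_mem_erase hc)]
      rw [e1, e2, e3, if_pos rfl]
      ring
    have h0val : h 0 = -q := by
      rw [hh]
      simp only [zero_mul, inv_zero, mul_zero, chi_zero]
      ring
    have hbij : Function.Bijective (fun c : Fq n => (c * θ c)⁻¹) := by
      have hinj : Function.Injective (fun c : Fq n => (c * θ c)⁻¹) := by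
        intro c c' hcc
        exact norm_injective hodd (inv_injective hcc)
      exact Finite.injective_iff_bijective.mp hinj
    have hc2 : ∑ c : Fq n, h c = -q * ∑ y : Fq n, chi θ (β * y) := by
      rw [hh, ← Finset.mul_sum]
      congr 1
      exact Fintype.sum_bijective _ hbij _ _ (fun c => rfl)
    rw [hsplit, hc2, h0val, chi_sum_full hθ hodd β]
    by_cases hβ : β = 0
    · rw [if_pos hβ, if_pos rfl, if_pos (hone.mpr hβ), ← hqdef]
      ring
    · rw [if_neg hβ, if_pos rfl, if_neg (fun hcon => hβ (hone.mp hcon))]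
      ring
  · -- non-central case : everything vanishes
    have hone : ((⟨α, β⟩ : SuzukiA n θ) = 1) → False := by
      intro h
      exact hα (congrArg SuzukiA.a h)
    rw [if_neg hα, if_neg hone]
    have hz : ∀ c : Fq n,
        (∑ d : Fq n, fC C ⟨c, d⟩ * fC C ⟨α + c, β + (d + c * θ c) + α * θ c⟩) = 0 := by
      intro c
      by_cases hc0 : c = 0
      · subst hc0
        apply Finset.sum_eq_zero
        intro d _
        rw [fC_zero C hord (show (⟨(0:Fq n), d⟩ : SuzukiA n θ).a = 0 from rfl), zero_mul]
      by_cases hcα : α + c = 0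
      · apply Finset.sum_eq_zero
        intro d _
        rw [fC_zero C hord
          (show (⟨α + c, β + (d + c * θ c) + α * θ c⟩ : SuzukiA n θ).a = 0 from hcα), mul_zero]
      · have hθc : θ c ≠ 0 := theta_ne hc0
        have hcc : c * θ c ≠ 0 := mul_ne_zero hc0 hθc
        have hγ0 : (α + c) * θ (α + c) ≠ 0 := mul_ne_zero hcα (theta_ne hcα)
        have hs0 : (c * θ c)⁻¹ + ((α + c) * θ (α + c))⁻¹ ≠ 0 := by
          intro hcon
          have h2 : (c * θ c)⁻¹ = ((α + c) * θ (α + c))⁻¹ := Mix.add_eq_zero_iff.mp hcon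
          exact norm_ne hθ hodd hα c (inv_inj.mp h2)
        have hterm : ∀ d : Fq n,
            fC C ⟨c, d⟩ * fC C ⟨α + c, β + (d + c * θ c) + α * θ c⟩
              = (eps C c * eps C (α + c)
                  * chi θ ((β + c * θ c + α * θ c) / ((α + c) * θ (α + c))))
                * chi θ (d * ((c * θ c)⁻¹ + ((α + c) * θ (α + c))⁻¹)) := by
          intro d
          rw [fC_formula hθ hodd C hconj hpair (show ((⟨c, d⟩ : SuzukiA n θ)).a ≠ 0 from hc0),
            fC_formula hθ hodd C hconj hpair
              (show ((⟨α + c, β + (d + c * θ c) + α * θ c⟩ : SuzukiA n θ)).a ≠ 0 from hcα)]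
          have h1 : (β + (d + c * θ c) + α * θ c) / ((α + c) * θ (α + c))
              = d / ((α + c) * θ (α + c))
                + (β + c * θ c + α * θ c) / ((α + c) * θ (α + c)) := by
            rw [show β + (d + c * θ c) + α * θ c = d + (β + c * θ c + α * θ c) from by ring,
              add_div]
          rw [h1, chi_add hθ]
          have h2 : chi θ (d / (c * θ c)) * chi θ (d / ((α + c) * θ (α + c)))
              = chi θ (d * ((c * θ c)⁻¹ + ((α + c) * θ (α + c))⁻¹)) := by
            rw [← chi_add hθ]
            congr 1
            rw [div_eq_mul_inv, div_eq_mul_inv]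
            ring
          linear_combination (eps C c * eps C (α + c)
            * chi θ ((β + c * θ c + α * θ c) / ((α + c) * θ (α + c)))) * h2
        rw [Finset.sum_congr rfl (fun d _ => hterm d), ← Finset.mul_sum,
          chi_sum_zero hθ hodd hs0, mul_zero]
    rw [Finset.sum_congr rfl (fun c _ => hz c)]
    rw [Finset.sum_const, smul_zero]
    ring


include hθ hodd hord hconj hpair in
theorem conv_ST (g : SuzukiA n θ) :
    ∑ x : SuzukiA n θ, fC C x * (if (g * x⁻¹).a = 0 then (1:ℝ) else 0) = 0 := by
  obtain ⟨α, β⟩ := g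
  have hsum : ∑ x : SuzukiA n θ, fC C x * (if ((⟨α, β⟩ : SuzukiA n θ) * x⁻¹).a = 0 then (1:ℝ) else 0)
      = ∑ c : Fq n, ∑ d : Fq n,
          fC C ⟨c, d⟩ * (if α + c = 0 then (1:ℝ) else 0) := by
    rw [← Equiv.sum_comp (pe n θ)
      (fun x => fC C x * (if ((⟨α, β⟩ : SuzukiA n θ) * x⁻¹).a = 0 then (1:ℝ) else 0)),
      Fintype.sum_prod_type]
    rfl
  rw [hsum]
  apply Finset.sum_eq_zero
  intro c _
  by_cases hc : α + c = 0
  · by_cases hc0 : c = 0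
    · apply Finset.sum_eq_zero
      intro d _
      rw [fC_zero C hord (show (⟨c, d⟩ : SuzukiA n θ).a = 0 from hc0), zero_mul]
    · have hcc : c * θ c ≠ 0 := mul_ne_zero hc0 (theta_ne hc0)
      have hterm : ∀ d : Fq n,
          fC C ⟨c, d⟩ * (if α + c = 0 then (1:ℝ) else 0)
            = eps C c * chi θ (d * (c * θ c)⁻¹) := by
        intro d
        rw [if_pos hc, mul_one,
          fC_formula hθ hodd C hconj hpair (show (⟨c, d⟩ : SuzukiA n θ).a ≠ 0 from hc0),
          div_eq_mul_inv]
      rw [Finset.sum_congr rfl (fun d _ => hterm d), ← Finset.mul_sum,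
        chi_sum_zero hθ hodd (inv_ne_zero hcc), mul_zero]
  · apply Finset.sum_eq_zero
    intro d _
    rw [if_neg hc, mul_zero]

include hθ hodd hord hconj hpair in
theorem conv_TS (g : SuzukiA n θ) :
    ∑ x : SuzukiA n θ, (if x.a = 0 then (1:ℝ) else 0) * fC C (g * x⁻¹) = 0 := by
  obtain ⟨α, β⟩ := g
  have hsum : ∑ x : SuzukiA n θ, (if x.a = 0 then (1:ℝ) else 0) * fC C ((⟨α, β⟩ : SuzukiA n θ) * x⁻¹)
      = ∑ c : Fq n, ∑ d : Fq n,
          (if c = 0 then (1:ℝ) else 0) * fC C ⟨α + c, β + (d + c * θ c) + α * θ c⟩ := by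
    rw [← Equiv.sum_comp (pe n θ)
      (fun x => (if x.a = 0 then (1:ℝ) else 0) * fC C ((⟨α, β⟩ : SuzukiA n θ) * x⁻¹)),
      Fintype.sum_prod_type]
    rfl
  rw [hsum]
  apply Finset.sum_eq_zero
  intro c _
  by_cases hc0 : c = 0
  · subst hc0
    by_cases hα : α = 0
    · apply Finset.sum_eq_zero
      intro d _
      rw [fC_zero C hord
        (show (⟨α + 0, β + (d + 0 * θ 0) + α * θ 0⟩ : SuzukiA n θ).a = 0 from by
          simpa using hα), mul_zero]
    · have hθα : θ α ≠ 0 := theta_ne hα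
      have haa : α * θ α ≠ 0 := mul_ne_zero hα hθα
      have hterm : ∀ d : Fq n,
          (if (0:Fq n) = 0 then (1:ℝ) else 0) * fC C ⟨α + 0, β + (d + 0 * θ 0) + α * θ 0⟩
            = (eps C α * chi θ (β / (α * θ α))) * chi θ (d * (α * θ α)⁻¹) := by
        intro d
        have e1 : (⟨α + 0, β + (d + 0 * θ 0) + α * θ 0⟩ : SuzukiA n θ) = ⟨α, β + d⟩ := by
          ext <;> simp
        rw [if_pos rfl, one_mul, e1,
          fC_formula hθ hodd C hconj hpair (show (⟨α, β + d⟩ : SuzukiA n θ).a ≠ 0 from hα)]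
        have h1 : (β + d) / (α * θ α) = β / (α * θ α) + d * (α * θ α)⁻¹ := by
          field_simp
        rw [h1, chi_add hθ]
        ring
      rw [Finset.sum_congr rfl (fun d _ => hterm d), ← Finset.mul_sum,
        chi_sum_zero hθ hodd (inv_ne_zero haa), mul_zero]
  · apply Finset.sum_eq_zero
    intro d _
    rw [if_neg hc0, zero_mul]

theorem conv_TT (g : SuzukiA n θ) :
    ∑ x : SuzukiA n θ, (if x.a = 0 then (1:ℝ) else 0) * (if (g * x⁻¹).a = 0 then (1:ℝ) else 0)
      = (Fintype.card (Fq n) : ℝ) * (if g.a = 0 then 1 else 0) := by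
  obtain ⟨α, β⟩ := g
  have hsum : ∑ x : SuzukiA n θ,
        (if x.a = 0 then (1:ℝ) else 0) * (if ((⟨α, β⟩ : SuzukiA n θ) * x⁻¹).a = 0 then (1:ℝ) else 0)
      = ∑ c : Fq n, ∑ d : Fq n,
          (if c = 0 then (1:ℝ) else 0) * (if α + c = 0 then (1:ℝ) else 0) := by
    rw [← Equiv.sum_comp (pe n θ)
      (fun x => (if x.a = 0 then (1:ℝ) else 0) * (if ((⟨α, β⟩ : SuzukiA n θ) * x⁻¹).a = 0 then (1:ℝ) else 0)),
      Fintype.sum_prod_type]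
    rfl
  rw [hsum]
  have hout : ∀ c : Fq n, (∑ d : Fq n,
      (if c = 0 then (1:ℝ) else 0) * (if α + c = 0 then (1:ℝ) else 0))
        = (if c = 0 then ((Fintype.card (Fq n) : ℝ) * (if α = 0 then 1 else 0)) else 0) := by
    intro c
    by_cases hc0 : c = 0
    · subst hc0
      simp [Finset.sum_const, Finset.card_univ, nsmul_eq_mul]
    · simp [if_neg hc0]
  rw [Finset.sum_congr rfl (fun c _ => hout c), Finset.sum_ite_eq' Finset.univ (0:Fq n)
    (fun _ => ((Fintype.card (Fq n) : ℝ) * (if α = 0 then 1 else 0))), if_pos (Finset.mem_univ _)]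


include hθ hodd hord hconj hpair in
theorem matSS :
    skewAdj (SuzukiA n θ) C * skewAdj (SuzukiA n θ) C
      = (Fintype.card (Fq n) : ℝ) • Tm n θ - ((Fintype.card (Fq n) : ℝ))^2 • 1 := by
  ext u v
  rw [Matrix.mul_apply]
  have he : ∀ w, skewAdj (SuzukiA n θ) C u w * skewAdj (SuzukiA n θ) C w v
      = fC C (w * u⁻¹) * fC C (v * w⁻¹) := fun w => rfl
  rw [Finset.sum_congr rfl (fun w _ => he w), sum_reindex,
    conv_main hθ hodd C hord hconj hpair (v * u⁻¹)]
  rw [Matrix.sub_apply, Matrix.smul_apply, Matrix.smul_apply, Matrix.one_apply,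
    smul_eq_mul, smul_eq_mul]
  have hiff : ((v * u⁻¹ = 1)) ↔ (u = v) := by
    rw [mul_inv_eq_one]; exact eq_comm
  have h2 : (if v * u⁻¹ = 1 then (1:ℝ) else 0) = (if u = v then (1:ℝ) else 0) := by
    by_cases h : u = v
    · rw [if_pos (hiff.mpr h), if_pos h]
    · rw [if_neg (fun hc => h (hiff.mp hc)), if_neg h]
  rw [h2]
  rfl

include hθ hodd hord hconj hpair in
theorem matST : skewAdj (SuzukiA n θ) C * Tm n θ = 0 := by
  ext u v
  rw [Matrix.mul_apply]
  have he : ∀ w, skewAdj (SuzukiA n θ) C u w * Tm n θ w v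
      = fC C (w * u⁻¹) * (if (v * w⁻¹).a = 0 then (1:ℝ) else 0) := fun w => rfl
  rw [Finset.sum_congr rfl (fun w _ => he w),
    sum_reindex (fC C) (fun z => if z.a = 0 then (1:ℝ) else 0) u v,
    conv_ST hθ hodd C hord hconj hpair (v * u⁻¹)]
  rfl

include hθ hodd hord hconj hpair in
theorem matTS : Tm n θ * skewAdj (SuzukiA n θ) C = 0 := by
  ext u v
  rw [Matrix.mul_apply]
  have he : ∀ w, Tm n θ u w * skewAdj (SuzukiA n θ) C w v
      = (if (w * u⁻¹).a = 0 then (1:ℝ) else 0) * fC C (v * w⁻¹) := fun w => rfl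
  rw [Finset.sum_congr rfl (fun w _ => he w),
    sum_reindex (fun z => if z.a = 0 then (1:ℝ) else 0) (fC C) u v,
    conv_TS hθ hodd C hord hconj hpair (v * u⁻¹)]
  rfl

theorem matTT : Tm n θ * Tm n θ = (Fintype.card (Fq n) : ℝ) • Tm n θ := by
  ext u v
  rw [Matrix.mul_apply]
  have he : ∀ w, Tm n θ u w * Tm n θ w v
      = (if (w * u⁻¹).a = 0 then (1:ℝ) else 0) * (if (v * w⁻¹).a = 0 then (1:ℝ) else 0) :=
    fun w => rfl
  rw [Finset.sum_congr rfl (fun w _ => he w),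
    sum_reindex (fun z => if z.a = 0 then (1:ℝ) else 0)
      (fun z => if z.a = 0 then (1:ℝ) else 0) u v,
    conv_TT (v * u⁻¹)]
  rw [Matrix.smul_apply, smul_eq_mul]
  rfl

end withC
end Mix4

open scoped Classical

theorem exp_lemma {N : Type*} [Fintype N] [DecidableEq N]
    (S T : Matrix N N ℝ) (q : ℝ) (hq : 0 < q)
    (hSS : S * S = q • T - q^2 • 1) (hST : S * T = 0) :
    NormedSpace.exp ((Real.pi / (2*q)) • S)
      = 1 + q⁻¹ • S + (q^2)⁻¹ • (S * S) := by
  have hq0 : q ≠ 0 := ne_of_gt hq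
  set τ : ℝ := Real.pi / (2*q) with hτ
  have hπ : Real.pi / 2 = q * τ := by rw [hτ]; field_simp
  have hS3 : S * (S * S) = (-(q^2)) • S := by
    rw [hSS, mul_sub, mul_smul_comm, mul_smul_comm, hST, smul_zero, mul_one, zero_sub, neg_smul]
  have podd : ∀ j : ℕ, S ^ (2*j+1) = ((-(q^2))^j) • S := by
    intro j; induction j with
    | zero => simp
    | succ j ih =>
      have h1 : 2*(j+1)+1 = (2*j+1) + 2 := by ring
      have h2 : S ^ 2 = S * S := sq S
      rw [h1, pow_add, ih, h2, smul_mul_assoc, hS3, smul_smul, ← pow_succ]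
  have peven : ∀ j : ℕ, S ^ (2*j+2) = ((-(q^2))^j) • (S * S) := by
    intro j
    have h1 : 2*j+2 = (2*j+1) + 1 := by ring
    rw [h1, pow_succ, podd j, smul_mul_assoc]
  set A := q⁻¹ • S with hA
  set B := (q^2)⁻¹ • (S * S) with hB
  have hfacne : ∀ k : ℕ, ((k.factorial : ℝ)) ≠ 0 :=
    fun k => Nat.cast_ne_zero.mpr (Nat.factorial_ne_zero _)
  have hFodd : ∀ j : ℕ, (((2*j+1).factorial : ℝ))⁻¹ • (τ • S) ^ (2*j+1)
      = ((-1:ℝ)^j * (Real.pi/2)^(2*j+1) / (2*j+1).factorial) • A := by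
    intro j
    rw [smul_pow, podd j, hA, smul_smul, smul_smul, smul_smul]
    congr 1
    rw [hπ, neg_pow, mul_pow, pow_succ q (2*j), ← pow_mul]
    field_simp
  have hFeven : ∀ j : ℕ, (((2*j+2).factorial : ℝ))⁻¹ • (τ • S) ^ (2*j+2)
      = ((-1:ℝ)^j * (Real.pi/2)^(2*j+2) / (2*j+2).factorial) • B := by
    intro j
    rw [smul_pow, peven j, hB, smul_smul, smul_smul, smul_smul]
    congr 1
    rw [hπ, neg_pow, mul_pow, show 2*j+2 = 2*j + 2 from rfl, pow_add q (2*j) 2, ← pow_mul]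
    field_simp
  have hAsum : HasSum (fun j : ℕ => ((-1:ℝ)^j * (Real.pi/2)^(2*j+1) / (2*j+1).factorial) • A) A := by
    have hs := Real.hasSum_sin (Real.pi/2)
    rw [Real.sin_pi_div_two] at hs
    have := hs.smul_const A
    rwa [one_smul] at this
  have hBsum : HasSum (fun j : ℕ => ((-1:ℝ)^j * (Real.pi/2)^(2*j+2) / (2*j+2).factorial) • B) B := by
    have hc := Real.hasSum_cos (Real.pi/2)
    rw [Real.cos_pi_div_two] at hc
    have h1 : HasSum (fun j : ℕ =>
        ((-1:ℝ)^(j+1) * (Real.pi/2)^(2*(j+1)) / (2*(j+1)).factorial)) (-1) := by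
      apply (hasSum_nat_add_iff (f := fun j : ℕ =>
        ((-1:ℝ)^j * (Real.pi/2)^(2*j) / (2*j).factorial)) 1).mpr
      have h0 : ∑ i ∈ Finset.range 1,
          ((-1:ℝ)^i * (Real.pi/2)^(2*i) / (2*i).factorial) = 1 := by simp
      rw [h0]
      simpa using hc
    have h2 := h1.neg
    have h3 : (fun j : ℕ => -((-1:ℝ)^(j+1) * (Real.pi/2)^(2*(j+1)) / (2*(j+1)).factorial))
        = (fun j : ℕ => ((-1:ℝ)^j * (Real.pi/2)^(2*j+2) / (2*j+2).factorial)) := by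
      funext j
      rw [show 2*(j+1) = 2*j+2 from by ring, pow_succ]
      ring
    rw [h3] at h2
    simpa using h2.smul_const B
  set F : ℕ → Matrix N N ℝ := fun k => ((k.factorial : ℝ))⁻¹ • (τ • S)^k with hF
  have h1sum : HasSum (fun k : ℕ => if k = 0 then (1 : Matrix N N ℝ) else 0) 1 :=
    hasSum_ite_eq 0 1
  have hoddsum : HasSum (fun k : ℕ => if k % 2 = 1 then F k else 0) A := by
    have hinj : Function.Injective (fun j : ℕ => 2*j+1) := by
      intro a b hab
      have : 2*a+1 = 2*b+1 := hab
      omega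
    have hvan : ∀ k ∉ Set.range (fun j : ℕ => 2*j+1),
        (if k % 2 = 1 then F k else 0) = 0 := by
      intro k hk
      rw [if_neg]
      intro hmod
      exact hk ⟨k/2, by show 2*(k/2)+1 = k; omega⟩
    apply (Function.Injective.hasSum_iff hinj hvan).mp
    have heq : ((fun k : ℕ => if k % 2 = 1 then F k else 0) ∘ (fun j : ℕ => 2*j+1))
        = fun j : ℕ => ((-1:ℝ)^j * (Real.pi/2)^(2*j+1) / (2*j+1).factorial) • A := by
      funext j
      simp only [Function.comp]
      rw [if_pos (by omega), hF]
      exact hFodd j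
    rw [heq]
    exact hAsum
  have hevensum : HasSum (fun k : ℕ => if k ≠ 0 ∧ k % 2 = 0 then F k else 0) B := by
    have hinj : Function.Injective (fun j : ℕ => 2*j+2) := by
      intro a b hab
      have : 2*a+2 = 2*b+2 := hab
      omega
    have hvan : ∀ k ∉ Set.range (fun j : ℕ => 2*j+2),
        (if k ≠ 0 ∧ k % 2 = 0 then F k else 0) = 0 := by
      intro k hk
      rw [if_neg]
      intro hmod
      exact hk ⟨k/2 - 1, by show 2*(k/2-1)+2 = k; omega⟩
    apply (Function.Injective.hasSum_iff hinj hvan).mp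
    have heq : ((fun k : ℕ => if k ≠ 0 ∧ k % 2 = 0 then F k else 0) ∘ (fun j : ℕ => 2*j+2))
        = fun j : ℕ => ((-1:ℝ)^j * (Real.pi/2)^(2*j+2) / (2*j+2).factorial) • B := by
      funext j
      simp only [Function.comp]
      rw [if_pos (by omega), hF]
      exact hFeven j
    rw [heq]
    exact hBsum
  have hsplit : ∀ k : ℕ, F k = (if k = 0 then (1 : Matrix N N ℝ) else 0)
      + (if k % 2 = 1 then F k else 0) + (if k ≠ 0 ∧ k % 2 = 0 then F k else 0) := by
    intro k
    rcases Nat.eq_zero_or_pos k with rfl | hk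
    · rw [if_pos rfl, if_neg (by omega), if_neg (by omega)]
      rw [hF]
      simp
    · rcases Nat.even_or_odd k with he | ho
      · rw [if_neg (by omega), if_neg (by rw [Nat.even_iff] at he; omega),
          if_pos (by rw [Nat.even_iff] at he; omega)]
        rw [zero_add, zero_add]
      · rw [if_neg (by omega), if_pos (by rw [Nat.odd_iff] at ho; omega),
          if_neg (by rw [Nat.odd_iff] at ho; omega)]
        rw [zero_add, add_zero]
  have htot : HasSum F (1 + A + B) := by
    have hsum3 := (h1sum.add hoddsum).add hevensum
    have : F = fun k => ((if k = 0 then (1 : Matrix N N ℝ) else 0)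
        + (if k % 2 = 1 then F k else 0)) + (if k ≠ 0 ∧ k % 2 = 0 then F k else 0) := by
      funext k
      exact hsplit k
    rw [this]
    exact hsum3
  rw [NormedSpace.exp_eq_tsum ℝ]
  exact htot.tsum_eq

open SuzukiA in
theorem stmt19 (n m : ℕ) (hm : n = 2 * m + 1) (hn : 1 < n) (θ : Fq n ≃+* Fq n)
    (hθ : ∀ σ : Fq n ≃+* Fq n, σ ∈ Subgroup.zpowers θ)
    (C : Finset (SuzukiA n θ))
    (hord : ∀ g ∈ C, orderOf g = 4)
    (hconj : ∀ g ∈ C, ∀ h, IsConj g h → h ∈ C)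
    (hpair : ∀ g : SuzukiA n θ, orderOf g = 4 → (g ∈ C ↔ g⁻¹ ∉ C)) :
    ∀ u v : SuzukiA n θ,
      |NormedSpace.exp ((Real.pi / 2 ^ (n + 1)) • skewAdj (SuzukiA n θ) C) u v| =
        ((2 : ℝ) ^ n)⁻¹ := by
  intro u v
  have hodd : Odd n := ⟨m, by omega⟩
  have hn0 : n ≠ 0 := by omega
  set q : ℝ := (Fintype.card (Fq n) : ℝ) with hq
  have hcard : (Fintype.card (Fq n) : ℕ) = 2^n := by
    have h := GaloisField.card 2 n hn0
    rwa [Nat.card_eq_fintype_card] at h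
  have hqval : q = 2^n := by rw [hq, hcard]; push_cast; ring
  have hqpos : 0 < q := by rw [hqval]; positivity
  have hq0 : q ≠ 0 := ne_of_gt hqpos
  have hτ : (Real.pi / 2^(n+1) : ℝ) = Real.pi / (2*q) := by
    rw [hqval, pow_succ]
    ring_nf
  have hSS := Mix4.matSS hθ hodd C hord hconj hpair
  have hST := Mix4.matST hθ hodd C hord hconj hpair
  rw [← hq] at hSS
  have hexp := exp_lemma (skewAdj (SuzukiA n θ) C) (Mix4.Tm n θ) q hqpos hSS hST
  rw [hτ, hexp]
  have hU : (1 : Matrix (SuzukiA n θ) (SuzukiA n θ) ℝ)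
        + q⁻¹ • skewAdj (SuzukiA n θ) C + (q^2)⁻¹ • (skewAdj (SuzukiA n θ) C * skewAdj (SuzukiA n θ) C)
      = q⁻¹ • (skewAdj (SuzukiA n θ) C + Mix4.Tm n θ) := by
    rw [hSS, smul_sub, smul_smul, smul_smul]
    have e1 : (q^2)⁻¹ * q = q⁻¹ := by
      rw [sq]
      field_simp
    have e2 : (q^2)⁻¹ * q^2 = 1 := inv_mul_cancel₀ (pow_ne_zero 2 hq0)
    rw [e1, e2, one_smul, smul_add]
    abel
  rw [hU]
  have hentry : (q⁻¹ • (skewAdj (SuzukiA n θ) C + Mix4.Tm n θ)) u v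
      = q⁻¹ * (Mix4.fC C (v * u⁻¹) + (if (v * u⁻¹).a = 0 then (1:ℝ) else 0)) := by
    rw [Matrix.smul_apply, Matrix.add_apply, smul_eq_mul]
    rfl
  rw [hentry, abs_mul, abs_inv, abs_of_pos hqpos]
  have hone : |Mix4.fC C (v * u⁻¹) + (if (v * u⁻¹).a = 0 then (1:ℝ) else 0)| = 1 := by
    by_cases ha : (v * u⁻¹).a = 0
    · rw [Mix4.fC_zero C hord ha, if_pos ha, zero_add, abs_one]
    · rw [if_neg ha, add_zero, Mix4.fC_formula hθ hodd C hconj hpair ha, abs_mul,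
        Mix2.chi_abs, mul_one]
      unfold Mix4.eps
      split <;> simp
  rw [hone, mul_one, hqval]
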